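/- The function h(x) = log(x+1) − (x/(x+1))·log(x) is strictly decreasing on (1, ∞). -/

import Mathlib

theorem h_strictAntiOn :
    StrictAntiOn (fun x : ℝ => Real.log (x + 1) - (x / (x + 1)) * Real.log x)
      (Set.Ioi 1) := by
  have key : ∀ x ∈ Set.Ioi (1:ℝ), HasDerivAt
      (fun x : ℝ => Real.log (x + 1) - (x / (x + 1)) * Real.log x)
      (-(Real.log x / (x+1)^2)) x := by
    intro x hx
    have hx1 : (1:ℝ) < x := hx
    have hx0 : x ≠ 0 := by linarith
    have hx1' : x + 1 ≠ 0 := by linarith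
    have h1 : HasDerivAt (fun x : ℝ => Real.log (x + 1)) (1/(x+1)) x := by
      have := (Real.hasDerivAt_log hx1').comp x ((hasDerivAt_id x).add_const 1)
      simpa [one_div, Function.comp_def] using this
    have h2 : HasDerivAt (fun x : ℝ => x / (x + 1))
        ((1*(x+1) - x*1)/(x+1)^2) x :=
      (hasDerivAt_id x).div ((hasDerivAt_id x).add_const 1) hx1'
    have h3 : HasDerivAt (fun x : ℝ => (x / (x + 1)) * Real.log x)
        ((1*(x+1) - x*1)/(x+1)^2 * Real.log x + (x/(x+1)) * x⁻¹) x :=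
      h2.mul (Real.hasDerivAt_log hx0)
    have h4 := h1.sub h3
    refine HasDerivAt.congr_deriv h4 ?_
    field_simp
    ring
  apply strictAntiOn_of_deriv_neg (convex_Ioi 1)
  · exact fun x hx => ((key x hx).differentiableAt).continuousAt.continuousWithinAt
  · intro x hx
    rw [interior_Ioi] at hx
    rw [(key x hx).deriv]
    have hx1 : (1:ℝ) < x := hx
    have hlog : 0 < Real.log x := Real.log_pos hx1
    have hsq : 0 < (x+1)^2 := pow_pos (by linarith) 2
    have := div_pos hlog hsq
    linarith
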